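/- If 0 < ε L < γ and the step size η satisfies 0 < η < 2(γ − εL)/(L²(1 − ε²)) with 0 ≤ ε < 1, then α := √(1 − 2ηγ + η²L²) + ηεL < 1. -/
import Mathlib

/-- the contraction factor `α = √(1 − 2ηγ + η²L²) + ηεL` of the
equilibrium primal-dual algorithm is strictly less than one under the stated
step-size condition.  (The inequality `γ ≤ L` is implicit in the paper, since
`γ` is the strong-monotonicity and `L` the Lipschitz constant of one map.) -/
theorem stmt_1 (γ L ε η : ℝ)
    (hL : 0 < L) (hεL : 0 < ε * L) (hεLγ : ε * L < γ) (hγL : γ ≤ L)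
    (hε0 : 0 ≤ ε) (hε1 : ε < 1)
    (hη0 : 0 < η) (hη : η < 2 * (γ - ε * L) / (L ^ 2 * (1 - ε ^ 2))) :
    Real.sqrt (1 - 2 * η * γ + η ^ 2 * L ^ 2) + η * ε * L < 1 := by
  have hden : 0 < L ^ 2 * (1 - ε ^ 2) := by nlinarith
  have key : η * (L ^ 2 * (1 - ε ^ 2)) < 2 * (γ - ε * L) :=
    (lt_div_iff₀ hden).mp hη
  have h1 : η * ε * L < 1 := by nlinarith
  have h2 : Real.sqrt (1 - 2 * η * γ + η ^ 2 * L ^ 2) < 1 - η * ε * L := by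
    rw [show (1 : ℝ) - η * ε * L = Real.sqrt ((1 - η * ε * L) ^ 2) by
      rw [Real.sqrt_sq (by linarith)]]
    apply Real.sqrt_lt_sqrt (by nlinarith [sq_nonneg (1 - η * L)])
    nlinarith
  linarith
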